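/- Let λ be a boundedly finite measure on ℝ satisfying T_x λ = e^x λ for all x ∈ ℝ, where T_x λ is the pushforward of λ by translation by x. Then there exists a constant c ≥ 0 such that λ(dx) = c e^{-x} dx. -/

import Mathlib

open Real MeasureTheory ENNReal

/-- Let `λ` be a boundedly finite measure on `ℝ` satisfying `T_x λ = e^x λ` for all `x ∈ ℝ`,
where `T_x λ` is the pushforward of `λ` under translation by `x` (so that
`λ(A − x) = e^x λ(A)`).  Then there exists a constant `c ≥ 0` with `λ(dx) = c e^{-x} dx`. -/
theorem translation_exponential_measure (lam : Measure ℝ)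
    (hfin : ∀ A : Set ℝ, MeasurableSet A → Bornology.IsBounded A → lam A < ⊤)
    (htrans : ∀ x : ℝ, Measure.map (fun y => y + x) lam = ENNReal.ofReal (Real.exp x) • lam) :
    ∃ c : ℝ, 0 ≤ c ∧
      lam = volume.withDensity (fun y => ENNReal.ofReal (c * Real.exp (-y))) := by
  set f : ℝ → ℝ≥0∞ := fun y => ENNReal.ofReal (Real.exp y) with hf
  have hfm : Measurable f := ENNReal.measurable_ofReal.comp Real.measurable_exp
  set μ := lam.withDensity f with hμ
  -- translation rule for lintegrals
  have hlint : ∀ x : ℝ, ∀ g : ℝ → ℝ≥0∞, Measurable g →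
      ∫⁻ y, g (y + x) ∂lam = ENNReal.ofReal (Real.exp x) * ∫⁻ y, g y ∂lam := by
    intro x g hg
    have := lintegral_map hg (measurable_add_const x) (μ := lam)
    rw [htrans x, lintegral_smul_measure] at this
    exact this.symm
  -- μ is translation invariant
  have hinv : ∀ x : ℝ, Measure.map (fun y => y + x) μ = μ := by
    intro x
    ext A hA
    rw [Measure.map_apply (measurable_add_const x) hA]
    have hA' : MeasurableSet ((fun y => y + x) ⁻¹' A) :=
      (measurable_add_const x) hA
    have h1 : μ A = ∫⁻ y, A.indicator f y ∂lam := by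
      rw [hμ, withDensity_apply _ hA, ← lintegral_indicator hA]
    have h2 : μ ((fun y => y + x) ⁻¹' A)
        = ∫⁻ y, ((fun y => y + x) ⁻¹' A).indicator f y ∂lam := by
      rw [hμ, withDensity_apply _ hA', ← lintegral_indicator hA']
    have key : ∫⁻ y, A.indicator f (y + x) ∂lam
        = ENNReal.ofReal (Real.exp x) * ∫⁻ y, A.indicator f y ∂lam :=
      hlint x _ (hfm.indicator hA)
    have heq : ∀ y : ℝ, A.indicator f (y + x)
        = ENNReal.ofReal (Real.exp x) * ((fun y => y + x) ⁻¹' A).indicator f y := by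
      intro y
      by_cases hy : y + x ∈ A
      · rw [Set.indicator_of_mem hy,
          Set.indicator_of_mem (show y ∈ (fun y => y + x) ⁻¹' A from hy), hf]
        simp only
        rw [← ENNReal.ofReal_mul (Real.exp_nonneg x), ← Real.exp_add, add_comm]
      · rw [Set.indicator_of_notMem hy,
          Set.indicator_of_notMem (show y ∉ (fun y => y + x) ⁻¹' A from hy), mul_zero]
    rw [funext heq] at key
    rw [lintegral_const_mul _ (hfm.indicator hA')] at key
    have hne : (ENNReal.ofReal (Real.exp x)) ≠ 0 := by
      simp [Real.exp_pos x]
    have hnetop : (ENNReal.ofReal (Real.exp x)) ≠ ⊤ := ENNReal.ofReal_ne_top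
    rw [h1, h2]
    exact (ENNReal.mul_right_inj hne hnetop).mp key
  haveI : μ.IsAddLeftInvariant := by
    constructor
    intro x
    have : (fun y => x + y) = fun y => y + x := by funext y; ring
    rw [this]; exact hinv x
  haveI : IsFiniteMeasureOnCompacts μ := by
    constructor
    intro K hK
    obtain ⟨M, hM⟩ := (hK.isBounded.subset_closedBall 0)
    have hKM : K ⊆ Set.Icc (-M) M := by
      intro y hy
      have := hM hy
      simp only [Metric.mem_closedBall, Real.dist_eq, sub_zero] at this
      exact ⟨neg_le_of_abs_le this, le_of_abs_le this⟩
    have hbound : ∀ y ∈ K, f y ≤ ENNReal.ofReal (Real.exp M) := by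
      intro y hy
      exact ENNReal.ofReal_le_ofReal (Real.exp_le_exp.mpr (hKM hy).2)
    calc μ K = ∫⁻ y in K, f y ∂lam := withDensity_apply _ hK.measurableSet
      _ ≤ ∫⁻ _ in K, ENNReal.ofReal (Real.exp M) ∂lam :=
          setLIntegral_mono measurable_const hbound
      _ = ENNReal.ofReal (Real.exp M) * lam K := by
          rw [setLIntegral_const]
      _ < ⊤ := ENNReal.mul_lt_top ENNReal.ofReal_lt_top
          (hfin K hK.measurableSet hK.isBounded)
  -- uniqueness of Haar measure
  have huniq : μ = μ.addHaarScalarFactor volume • (volume : Measure ℝ) :=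
    Measure.isAddLeftInvariant_eq_smul μ volume
  set c : NNReal := μ.addHaarScalarFactor volume with hc
  refine ⟨c, c.coe_nonneg, ?_⟩
  set g : ℝ → ℝ≥0∞ := fun y => ENNReal.ofReal (Real.exp (-y)) with hg
  have hgm : Measurable g := ENNReal.measurable_ofReal.comp (Real.measurable_exp.comp measurable_neg)
  have hlam : lam = μ.withDensity g := by
    rw [hμ, ← withDensity_mul _ hfm hgm]
    have : f * g = 1 := by
      funext y
      simp only [Pi.mul_apply, Pi.one_apply, hf, hg,
        ← ENNReal.ofReal_mul (Real.exp_nonneg y), ← Real.exp_add]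
      simp
    rw [this, withDensity_one]
  rw [hlam, huniq]
  have hdens : (fun y => ENNReal.ofReal ((c:ℝ) * Real.exp (-y))) = fun y => (c : ℝ≥0∞) * g y := by
    funext y
    rw [hg, ENNReal.ofReal_mul c.coe_nonneg, ENNReal.ofReal_coe_nnreal]
  rw [hdens]
  have hsm : (c • (volume : Measure ℝ)) = ((c : ℝ≥0∞) • (volume : Measure ℝ)) := rfl
  ext A hA
  rw [withDensity_apply _ hA, withDensity_apply _ hA, hsm, Measure.restrict_smul,
    lintegral_smul_measure, lintegral_const_mul _ hgm, smul_eq_mul]
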